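/- arXiv:2011.03698 — 3 statements merged into one kernel-verified Lean document; each statement's English description precedes it below -/
import Mathlib

section
/- Suppose a user moves linearly with constant step length d > 0 starting at (q₁, u₁), so that the position at step n is (q₁ + (n−1)d, u₁), and the ranging measurement satisfies rₙ = ‖(q₁ + (n−1)d, u₁)‖ + b. Then for any three distinct indices n, a₁, a₂, the identity d²(a₁ − a₂) + 2b·((rₙ − r_{a₁})/(n − a₁) − (rₙ − r_{a₂})/(n − a₂)) = (rₙ² − r_{a₁}²)/(n − a₁) − (rₙ² − r_{a₂}²)/(n − a₂) holds. -/
theorem linear_soe_identity (q₁ u₁ d b : ℝ) (r : ℕ → ℝ)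
    (hr : ∀ k : ℕ, r k = Real.sqrt ((q₁ + ((k : ℝ) - 1) * d) ^ 2 + u₁ ^ 2) + b)
    (n a₁ a₂ : ℕ) (hn : 1 ≤ n) (ha₁ : 1 ≤ a₁) (ha₂ : 1 ≤ a₂)
    (hna₁ : n ≠ a₁) (hna₂ : n ≠ a₂) (ha : a₁ ≠ a₂) :
    d ^ 2 * ((a₁ : ℝ) - a₂) +
      2 * b * ((r n - r a₁) / ((n : ℝ) - a₁) - (r n - r a₂) / ((n : ℝ) - a₂)) =
    (r n ^ 2 - r a₁ ^ 2) / ((n : ℝ) - a₁) - (r n ^ 2 - r a₂ ^ 2) / ((n : ℝ) - a₂) := by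
  have key : ∀ k : ℕ, r k ^ 2 = (q₁ + ((k : ℝ) - 1) * d) ^ 2 + u₁ ^ 2 + 2 * b * r k - b ^ 2 := by
    intro k
    have h := hr k
    have hs : Real.sqrt ((q₁ + ((k : ℝ) - 1) * d) ^ 2 + u₁ ^ 2) ^ 2
        = (q₁ + ((k : ℝ) - 1) * d) ^ 2 + u₁ ^ 2 := Real.sq_sqrt (by positivity)
    rw [h]; linear_combination hs
  have hA : (n : ℝ) - a₁ ≠ 0 := sub_ne_zero.mpr (by exact_mod_cast hna₁)
  have hB : (n : ℝ) - a₂ ≠ 0 := sub_ne_zero.mpr (by exact_mod_cast hna₂)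
  field_simp
  linear_combination - (((n : ℝ) - a₂) * (key n - key a₁) - ((n : ℝ) - a₁) * (key n - key a₂))
end

section
/- Let two APs be at distinct positions p₁ ≠ p₂ and suppose the relative trajectories satisfy z⁽¹⁾ₙ − z⁽²⁾ₙ = c (constant vector) with ‖c‖ = ‖p₂ − p₁‖ > 0. Then there exists a unique ω* ∈ [0, 2π) such that Θ(−ω*)(p₂ − p₁) = c, and for that ω* the globally rotated trajectories coincide: p₁ + Θ(ω*)z⁽¹⁾ₙ = p₂ + Θ(ω*)z⁽²⁾ₙ for all n. -/
open Real

-- existence: point on unit circle has angle in [0, 2π)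
lemma exists_angle (a b : ℝ) (h : a^2 + b^2 = 1) :
    ∃ ω ∈ Set.Ico 0 (2*π), Real.cos ω = a ∧ Real.sin ω = b := by
  set w : ℂ := ⟨a, b⟩ with hw
  have habs : ‖w‖ = 1 := by
    simp [Complex.norm_def, Complex.normSq_apply, hw]
    nlinarith [h]
  have hw0 : w ≠ 0 := by
    intro h0; rw [h0] at habs; simp at habs
  have hcos : Real.cos (Complex.arg w) = a := by
    rw [Complex.cos_arg hw0, habs]; simp [hw]
  have hsin : Real.sin (Complex.arg w) = b := by
    rw [Complex.sin_arg, habs]; simp [hw]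
  have hmem := Complex.arg_mem_Ioc w
  by_cases hnn : 0 ≤ Complex.arg w
  · exact ⟨Complex.arg w, ⟨hnn, lt_of_le_of_lt hmem.2 (by nlinarith [Real.pi_pos])⟩, hcos, hsin⟩
  · refine ⟨Complex.arg w + 2*π, ⟨by nlinarith [hmem.1, Real.pi_pos], by nlinarith [not_le.1 hnn]⟩,
      ?_, ?_⟩
    · rw [Real.cos_add_two_pi]; exact hcos
    · rw [Real.sin_add_two_pi]; exact hsin

lemma angle_unique {ω ω' : ℝ} (hω : ω ∈ Set.Ico 0 (2*π)) (hω' : ω' ∈ Set.Ico 0 (2*π))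
    (hc : Real.cos ω = Real.cos ω') (hs : Real.sin ω = Real.sin ω') : ω = ω' := by
  have : Complex.exp (ω * Complex.I) = Complex.exp (ω' * Complex.I) := by
    rw [Complex.exp_mul_I, Complex.exp_mul_I]
    simp only [← Complex.ofReal_cos, ← Complex.ofReal_sin, hc, hs]
  rw [Complex.exp_eq_exp_iff_exists_int] at this
  obtain ⟨n, hn⟩ := this
  have hr : ω = ω' + n * (2*π) := by
    have him := congrArg Complex.im hn
    simpa using him
  have hn0 : n = 0 := by
    rcases lt_trichotomy n 0 with h | h | h
    · exfalso
      have hn1 : n ≤ -1 := by omega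
      have : (n:ℝ) ≤ -1 := by exact_mod_cast hn1
      nlinarith [hω.1, hω.2, hω'.1, hω'.2, Real.pi_pos]
    · exact h
    · exfalso
      have : (1:ℝ) ≤ n := by exact_mod_cast h
      nlinarith [hω.1, hω.2, hω'.1, hω'.2, Real.pi_pos]
  simp [hn0] at hr; exact hr

noncomputable def rotMat (ω : ℝ) : Matrix (Fin 2) (Fin 2) ℝ :=
  !![Real.cos ω, -Real.sin ω; Real.sin ω, Real.cos ω]

lemma rotMat_mulVec (θ : ℝ) (v : Fin 2 → ℝ) :
    (rotMat θ).mulVec v = ![Real.cos θ * v 0 - Real.sin θ * v 1,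
      Real.sin θ * v 0 + Real.cos θ * v 1] := by
  funext i
  fin_cases i <;>
    simp [rotMat, Matrix.mulVec, dotProduct, Fin.sum_univ_two] <;> ring

theorem trajectory_alignment_unique (p₁ p₂ : Fin 2 → ℝ) (hp : p₁ ≠ p₂)
    (c : Fin 2 → ℝ)
    (hc : ‖(WithLp.equiv 2 (Fin 2 → ℝ)).symm c‖ =
      ‖(WithLp.equiv 2 (Fin 2 → ℝ)).symm (p₂ - p₁)‖)
    (z₁ z₂ : ℕ → Fin 2 → ℝ) (hz : ∀ n, z₁ n - z₂ n = c) :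
    ∃! ω : ℝ, ω ∈ Set.Ico 0 (2 * Real.pi) ∧
      (rotMat (-ω)).mulVec (p₂ - p₁) = c ∧
      ∀ n, p₁ + (rotMat ω).mulVec (z₁ n) = p₂ + (rotMat ω).mulVec (z₂ n) := by
  have hD0 : (p₂ - p₁) 0 = p₂ 0 - p₁ 0 := rfl
  have hD1 : (p₂ - p₁) 1 = p₂ 1 - p₁ 1 := rfl
  set D0 : ℝ := p₂ 0 - p₁ 0 with hD0'
  set D1 : ℝ := p₂ 1 - p₁ 1 with hD1'
  clear_value D0 D1
  have hcc : c 0 ^ 2 + c 1 ^ 2 = D0 ^ 2 + D1 ^ 2 := by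
    rw [EuclideanSpace.norm_eq, EuclideanSpace.norm_eq] at hc
    simp only [PiLp.toLp_apply, Fin.sum_univ_two, Real.norm_eq_abs, sq_abs,
      hD0, hD1] at hc
    have h1 : (0:ℝ) ≤ c 0 ^ 2 + c 1 ^ 2 := by positivity
    have h2 : (0:ℝ) ≤ D0 ^ 2 + D1 ^ 2 := by positivity
    have := congrArg (· ^ 2) hc
    simpa [Real.sq_sqrt h1, Real.sq_sqrt h2, ← hD0', ← hD1'] using this
  have hdne : D0 ≠ 0 ∨ D1 ≠ 0 := by
    by_contra h
    push_neg at h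
    apply hp
    funext i
    fin_cases i
    · show p₁ 0 = p₂ 0
      have := h.1; rw [hD0'] at this; linarith
    · show p₁ 1 = p₂ 1
      have := h.2; rw [hD1'] at this; linarith
  have hr2 : 0 < D0 ^ 2 + D1 ^ 2 := by
    rcases hdne with h | h <;> positivity
  set r2 := D0 ^ 2 + D1 ^ 2 with hr2def
  clear_value r2
  have hr2ne : r2 ≠ 0 := ne_of_gt hr2
  set a := (c 0 * D0 + c 1 * D1) / r2 with ha
  set b := (c 0 * D1 - c 1 * D0) / r2 with hb
  clear_value a b
  have hab : a ^ 2 + b ^ 2 = 1 := by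
    rw [ha, hb]
    field_simp
    linear_combination (D0 ^ 2 + D1 ^ 2) * hcc - r2 * hr2def
  have hA : a * D0 + b * D1 = c 0 := by
    rw [ha, hb]
    field_simp
    linear_combination (- c 0) * hr2def
  have hB : -b * D0 + a * D1 = c 1 := by
    rw [ha, hb]
    field_simp
    linear_combination (- c 1) * hr2def
  have hC : ∀ θ : ℝ, Real.cos θ = a → Real.sin θ = b →
      (rotMat θ).mulVec c = p₂ - p₁ := by
    intro θ hco hsi
    rw [rotMat_mulVec]
    funext i
    fin_cases i
    · show Real.cos θ * c 0 - Real.sin θ * c 1 = (p₂ - p₁) 0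
      rw [hco, hsi, hD0, ha, hb]
      field_simp
      linear_combination D0 * hcc
    · show Real.sin θ * c 0 + Real.cos θ * c 1 = (p₂ - p₁) 1
      rw [hco, hsi, hD1, ha, hb]
      field_simp
      linear_combination D1 * hcc
  obtain ⟨ω, hωmem, hcos, hsin⟩ := exists_angle a b hab
  have hrot : (rotMat (-ω)).mulVec (p₂ - p₁) = c := by
    rw [rotMat_mulVec]
    funext i
    fin_cases i
    · show Real.cos (-ω) * (p₂ - p₁) 0 - Real.sin (-ω) * (p₂ - p₁) 1 = c 0
      rw [Real.cos_neg, Real.sin_neg, hcos, hsin, hD0, hD1]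
      linarith [hA]
    · show Real.sin (-ω) * (p₂ - p₁) 0 + Real.cos (-ω) * (p₂ - p₁) 1 = c 1
      rw [Real.cos_neg, Real.sin_neg, hcos, hsin, hD0, hD1]
      linarith [hB]
  have hrot' : (rotMat ω).mulVec c = p₂ - p₁ := hC ω hcos hsin
  refine ⟨ω, ⟨hωmem, hrot, ?_⟩, ?_⟩
  · intro n
    have hz2 : z₂ n = z₁ n - c := by rw [← hz n]; abel
    rw [hz2, Matrix.mulVec_sub, hrot']
    funext i
    simp only [Pi.add_apply, Pi.sub_apply]
    ring
  · rintro ω' ⟨hω'mem, hrot2, -⟩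
    have e0 := congrFun hrot2 0
    have e1 := congrFun hrot2 1
    rw [rotMat_mulVec] at e0 e1
    simp only [Real.cos_neg, Real.sin_neg, Matrix.cons_val_zero, Matrix.cons_val_one,
      Matrix.head_cons, hD0, hD1] at e0 e1
    have hco' : Real.cos ω' = a := by
      rw [ha]
      field_simp
      linear_combination D0 * e0 + D1 * e1 + Real.cos ω' * hr2def
    have hsi' : Real.sin ω' = b := by
      rw [hb]
      field_simp
      linear_combination D1 * e0 - D0 * e1 + Real.sin ω' * hr2def
    exact angle_unique hω'mem hωmem (hco'.trans hcos.symm) (hsi'.trans hsin.symm)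
end

section
/- Under the same hypothesis f_{a₁,a₂}(γ̂) = 0, the coefficient βₙ(γ̂) := 2(f_{n,a₂}(γ̂)(rₙ − r_{a₁}) − f_{n,a₁}(γ̂)(rₙ − r_{a₂})) equals 2·f_{n,a₁}(γ̂)·(r_{a₂} − r_{a₁}) for every n; consequently every row (αₙ(γ̂), βₙ(γ̂)) is a scalar multiple of the fixed row (η_{a₂,a₁}, 2(r_{a₂} − r_{a₁})), so the matrix A(S, γ̂) has rank at most 1. -/
noncomputable def fFun (θ : ℕ → ℝ) (n a : ℕ) (γ : ℝ) : ℝ :=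
  (∑ i ∈ Finset.Ico 1 n, Real.cos (θ i - γ)) - ∑ i ∈ Finset.Ico 1 a, Real.cos (θ i - γ)

noncomputable def cSum (θ : ℕ → ℝ) (n : ℕ) : ℝ := ∑ j ∈ Finset.Ico 1 n, Real.cos (θ j)

noncomputable def sSum (θ : ℕ → ℝ) (n : ℕ) : ℝ := ∑ j ∈ Finset.Ico 1 n, Real.sin (θ j)

noncomputable def etaFun (θ : ℕ → ℝ) (n a : ℕ) : ℝ :=
  (cSum θ n ^ 2 + sSum θ n ^ 2) - (cSum θ a ^ 2 + sSum θ a ^ 2)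

theorem beta_changed_and_rank_one (θ : ℕ → ℝ) (r : ℕ → ℝ) (a₁ a₂ : ℕ) (γhat : ℝ)
    (hf : fFun θ a₁ a₂ γhat = 0) :
    (∀ n : ℕ,
      2 * (fFun θ n a₂ γhat * (r n - r a₁) - fFun θ n a₁ γhat * (r n - r a₂)) =
        2 * fFun θ n a₁ γhat * (r a₂ - r a₁)) ∧
    (∀ n : ℕ, ∃ t : ℝ,
      (fFun θ n a₂ γhat * etaFun θ n a₁ - fFun θ n a₁ γhat * etaFun θ n a₂,
        2 * (fFun θ n a₂ γhat * (r n - r a₁) - fFun θ n a₁ γhat * (r n - r a₂))) =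
      (t * etaFun θ a₂ a₁, t * (2 * (r a₂ - r a₁)))) := by
  have hS : ∀ n : ℕ, fFun θ n a₂ γhat = fFun θ n a₁ γhat := by
    intro n; unfold fFun at hf ⊢; linarith
  constructor
  · intro n; rw [hS n]; ring
  · intro n
    refine ⟨fFun θ n a₁ γhat, ?_⟩
    rw [hS n]
    unfold etaFun
    exact Prod.ext (by ring) (by ring)
end
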